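/- With A the quantum complete intersection as below, the derived subalgebra L′ = [L,L] of the Lie algebra L = HH¹(A) is a nilpotent Lie algebra; in particular L is a solvable Lie algebra. -/

import Mathlib

/-!
Context: `A` is the quantum complete intersection
`A = k⟨x,y⟩/(x^p, y^p, yx − q·xy)` over a field `k` of odd prime characteristic `p`,
where `q ∈ k^×` has finite multiplicative order `e` with `2 ≤ e` and `e ∣ p − 1`.
`HH¹(A) = Der(A)/IDer(A)` is the first Hochschild cohomology of `A`, a Lie algebra
with bracket induced by `[f,g] = f∘g − g∘f`.
-/

section HochschildPrelim

variable (k : Type*) [CommRing k] (A : Type*) [Ring A] [Algebra k A]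

attribute [local instance 100] LieRing.ofAssociativeRing

/-- A derivation of the `k`-algebra `A`: a `k`-linear map satisfying the Leibniz rule. -/
def IsDeriv (f : Module.End k A) : Prop := ∀ a b : A, f (a * b) = a * f b + f a * b

/-- An inner derivation `[c, -] : a ↦ c*a - a*c`. -/
def IsInner (f : Module.End k A) : Prop := ∃ c : A, ∀ a : A, f a = c * a - a * c

/-- The Lie algebra `Der(A)` of derivations, as a Lie subalgebra of `End_k(A)`
(with the commutator bracket). -/
def Der : LieSubalgebra k (Module.End k A) where
  carrier := {f | IsDeriv k A f}
  add_mem' := by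
    intro f g hf hg
    intro a b
    simp only [LinearMap.add_apply, hf a b, hg a b]
    noncomm_ring
  zero_mem' := by intro a b; simp
  smul_mem' := by
    intro c f hf
    intro a b
    simp only [LinearMap.smul_apply, hf a b, smul_add, mul_smul_comm, smul_mul_assoc]
  lie_mem' := by
    intro f g hf hg
    intro a b
    rw [Ring.lie_def]
    simp only [LinearMap.sub_apply, Module.End.mul_apply]
    rw [hg a b, map_add, hf a (g b), hf (g a) b, hf a b, map_add, hg a (f b), hg (f a) b,
      mul_sub, sub_mul]
    abel

/-- The inner derivations form a Lie ideal `IDer(A)` of `Der(A)`. -/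
def IDer : LieIdeal k (Der k A) where
  carrier := {f | IsInner k A f.1}
  add_mem' := by
    rintro f g ⟨c, hc⟩ ⟨d, hd⟩
    refine ⟨c + d, fun a => ?_⟩
    show f.1 a + g.1 a = _
    rw [hc, hd]
    noncomm_ring
  zero_mem' := ⟨0, fun a => by simp⟩
  smul_mem' := by
    rintro t f ⟨c, hc⟩
    refine ⟨t • c, fun a => ?_⟩
    show t • f.1 a = _
    rw [hc, smul_sub, smul_mul_assoc, mul_smul_comm]
  lie_mem := by
    rintro x m ⟨c, hc⟩
    refine ⟨x.1 c, fun a => ?_⟩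
    have hx : IsDeriv k A x.1 := x.2
    have h : (↑(⁅x, m⁆ : Der k A) : Module.End k A) a = x.1 (m.1 a) - m.1 (x.1 a) := rfl
    rw [h, hc, hc, map_sub, hx c a, hx a c]
    abel

/-- The first Hochschild cohomology `HH¹(A) = Der(A)/IDer(A)`, as a quotient Lie algebra. -/
abbrev HH1 := Der k A ⧸ IDer k A

end HochschildPrelim

section QCIAux

variable {k : Type*} [Field k] {A : Type*} [Ring A] [Algebra k A]
variable {p : ℕ} {q : k} {x y : A}

/-- The monomial `x^i * y^j`. -/
def QCImono (x y : A) (i j : ℕ) : A := x ^ i * y ^ j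

/-- Span of monomials of total degree at least `m`. -/
def QCIV (b : Module.Basis (Fin p × Fin p) k A) (m : ℕ) : Submodule k A :=
  Submodule.span k (b '' {ij | m ≤ (ij.1 : ℕ) + (ij.2 : ℕ)})

lemma QCI_y_mul_xpow (hyx : y * x = q • (x * y)) (i : ℕ) :
    y * x ^ i = q ^ i • (x ^ i * y) := by
  induction i with
  | zero => simp
  | succ i ih =>
    rw [pow_succ, ← mul_assoc, ih, smul_mul_assoc, mul_assoc, hyx, mul_smul_comm, smul_smul,
      ← mul_assoc, ← pow_succ]

lemma QCI_ypow_mul_xpow (hyx : y * x = q • (x * y)) (j i : ℕ) :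
    y ^ j * x ^ i = q ^ (j * i) • (x ^ i * y ^ j) := by
  induction j with
  | zero => simp
  | succ j ih =>
    rw [pow_succ, mul_assoc, QCI_y_mul_xpow hyx, mul_smul_comm, ← mul_assoc, ih,
      smul_mul_assoc, smul_smul, ← pow_add, mul_assoc, ← pow_succ]
    congr 2
    ring

lemma QCImono_mul (hyx : y * x = q • (x * y)) (i j i' j' : ℕ) :
    QCImono x y i j * QCImono x y i' j' = q ^ (j * i') • QCImono x y (i + i') (j + j') := by
  unfold QCImono
  rw [mul_assoc, ← mul_assoc (y ^ j), QCI_ypow_mul_xpow hyx, smul_mul_assoc, mul_smul_comm]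
  rw [pow_add, pow_add]
  simp [mul_assoc]

lemma QCImono_eq_b {b : Module.Basis (Fin p × Fin p) k A}
    (hb : ∀ ij : Fin p × Fin p, b ij = x ^ (ij.1 : ℕ) * y ^ (ij.2 : ℕ))
    (i j : ℕ) (hi : i < p) (hj : j < p) :
    QCImono x y i j = b (⟨i, hi⟩, ⟨j, hj⟩) := by
  unfold QCImono; exact (hb (⟨i, hi⟩, ⟨j, hj⟩)).symm

lemma QCImono_eq_zero (hx : x ^ p = 0) (hy : y ^ p = 0) {i j : ℕ} (h : p ≤ i ∨ p ≤ j) :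
    QCImono x y i j = 0 := by
  unfold QCImono
  rcases h with h | h
  · rw [show i = p + (i - p) by omega, pow_add, hx, zero_mul, zero_mul]
  · rw [show j = p + (j - p) by omega, pow_add, hy, zero_mul, mul_zero]

lemma QCI_repr_mono {b : Module.Basis (Fin p × Fin p) k A}
    (hb : ∀ ij : Fin p × Fin p, b ij = x ^ (ij.1 : ℕ) * y ^ (ij.2 : ℕ))
    (hx : x ^ p = 0) (hy : y ^ p = 0) (i j : ℕ) (st : Fin p × Fin p) :
    b.repr (QCImono x y i j) st = if i = (st.1 : ℕ) ∧ j = (st.2 : ℕ) then 1 else 0 := by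
  by_cases hi : i < p
  · by_cases hj : j < p
    · rw [QCImono_eq_b hb i j hi hj, b.repr_self, Finsupp.single_apply]
      have : ((⟨i, hi⟩, ⟨j, hj⟩) : Fin p × Fin p) = st ↔ (i = (st.1 : ℕ) ∧ j = (st.2 : ℕ)) := by
        rw [Prod.ext_iff, Fin.ext_iff, Fin.ext_iff]
      simp [this]
    · rw [QCImono_eq_zero hx hy (Or.inr (le_of_not_gt hj)), map_zero, Finsupp.zero_apply, if_neg]
      rintro ⟨-, h2⟩
      exact hj (h2 ▸ st.2.isLt)
  · rw [QCImono_eq_zero hx hy (Or.inl (le_of_not_gt hi)), map_zero, Finsupp.zero_apply, if_neg]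
    rintro ⟨h1, -⟩
    exact hi (h1 ▸ st.1.isLt)

lemma QCI_repr_op {b : Module.Basis (Fin p × Fin p) k A}
    (hb : ∀ ij : Fin p × Fin p, b ij = x ^ (ij.1 : ℕ) * y ^ (ij.2 : ℕ))
    (hx : x ^ p = 0) (hy : y ^ p = 0)
    (op : A →ₗ[k] A) (di dj : ℕ) (g : ℕ → ℕ → k)
    (hop : ∀ ij : Fin p × Fin p,
      op (b ij) = g (ij.1 : ℕ) (ij.2 : ℕ) • QCImono x y ((ij.1 : ℕ) + di) ((ij.2 : ℕ) + dj))
    (w : A) (s t : Fin p) :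
    b.repr (op w) (s, t)
      = ∑ ij : Fin p × Fin p, b.repr w ij * (g (ij.1 : ℕ) (ij.2 : ℕ) *
          (if (ij.1 : ℕ) + di = (s : ℕ) ∧ (ij.2 : ℕ) + dj = (t : ℕ) then 1 else 0)) := by
  conv_lhs => rw [← b.sum_repr w]
  rw [map_sum, map_sum, Finsupp.finset_sum_apply]
  refine Finset.sum_congr rfl fun ij _ => ?_
  rw [map_smul, map_smul, Finsupp.smul_apply, hop ij, map_smul, Finsupp.smul_apply,
    QCI_repr_mono hb hx hy, smul_eq_mul, smul_eq_mul]

lemma QCI_repr_op_single {b : Module.Basis (Fin p × Fin p) k A}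
    (hb : ∀ ij : Fin p × Fin p, b ij = x ^ (ij.1 : ℕ) * y ^ (ij.2 : ℕ))
    (hx : x ^ p = 0) (hy : y ^ p = 0)
    (op : A →ₗ[k] A) (di dj : ℕ) (g : ℕ → ℕ → k)
    (hop : ∀ ij : Fin p × Fin p,
      op (b ij) = g (ij.1 : ℕ) (ij.2 : ℕ) • QCImono x y ((ij.1 : ℕ) + di) ((ij.2 : ℕ) + dj))
    (w : A) (s t s' t' : Fin p) (hs : (s' : ℕ) + di = (s : ℕ)) (ht : (t' : ℕ) + dj = (t : ℕ)) :
    b.repr (op w) (s, t) = b.repr w (s', t') * g (s' : ℕ) (t' : ℕ) := by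
  rw [QCI_repr_op hb hx hy op di dj g hop w s t]
  rw [Finset.sum_eq_single (s', t')]
  · rw [if_pos ⟨hs, ht⟩, mul_one]
  · rintro ij - hne
    rw [if_neg, mul_zero, mul_zero]
    rintro ⟨h1, h2⟩
    have e1 : (ij.1 : ℕ) = (s' : ℕ) := by omega
    have e2 : (ij.2 : ℕ) = (t' : ℕ) := by omega
    exact hne (Prod.ext (Fin.ext e1) (Fin.ext e2))
  · intro h
    exact absurd (Finset.mem_univ _) h

lemma QCI_repr_op_zero {b : Module.Basis (Fin p × Fin p) k A}
    (hb : ∀ ij : Fin p × Fin p, b ij = x ^ (ij.1 : ℕ) * y ^ (ij.2 : ℕ))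
    (hx : x ^ p = 0) (hy : y ^ p = 0)
    (op : A →ₗ[k] A) (di dj : ℕ) (g : ℕ → ℕ → k)
    (hop : ∀ ij : Fin p × Fin p,
      op (b ij) = g (ij.1 : ℕ) (ij.2 : ℕ) • QCImono x y ((ij.1 : ℕ) + di) ((ij.2 : ℕ) + dj))
    (w : A) (s t : Fin p)
    (hno : ∀ ij : Fin p × Fin p, ¬((ij.1 : ℕ) + di = (s : ℕ) ∧ (ij.2 : ℕ) + dj = (t : ℕ))) :
    b.repr (op w) (s, t) = 0 := by
  rw [QCI_repr_op hb hx hy op di dj g hop w s t]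
  refine Finset.sum_eq_zero fun ij _ => ?_
  rw [if_neg (hno ij), mul_zero, mul_zero]

end QCIAux

section QCIAux2

variable {k : Type*} [Field k] {A : Type*} [Ring A] [Algebra k A]
variable {p : ℕ} {q : k} {x y : A} {b : Module.Basis (Fin p × Fin p) k A}

variable (hyx : y * x = q • (x * y)) (hx : x ^ p = 0) (hy : y ^ p = 0)
variable (hb : ∀ ij : Fin p × Fin p, b ij = x ^ (ij.1 : ℕ) * y ^ (ij.2 : ℕ))

include hyx hb in
lemma QCI_hop_ymul : ∀ ij : Fin p × Fin p,
    (LinearMap.mulLeft k y) (b ij)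
      = (fun i _ : ℕ => q ^ i) (ij.1 : ℕ) (ij.2 : ℕ)
          • QCImono x y ((ij.1 : ℕ) + 0) ((ij.2 : ℕ) + 1) := by
  intro ij
  have h := QCImono_mul hyx 0 1 (ij.1 : ℕ) (ij.2 : ℕ)
  rw [show 1 + (ij.2 : ℕ) = (ij.2 : ℕ) + 1 by omega] at h
  simp only [QCImono, pow_zero, pow_one, one_mul, Nat.zero_add, Nat.add_zero] at h ⊢
  rw [LinearMap.mulLeft_apply, hb, h]

include hyx hb in
lemma QCI_hop_xmul : ∀ ij : Fin p × Fin p,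
    (LinearMap.mulLeft k x) (b ij)
      = (fun _ _ : ℕ => (1 : k)) (ij.1 : ℕ) (ij.2 : ℕ)
          • QCImono x y ((ij.1 : ℕ) + 1) ((ij.2 : ℕ) + 0) := by
  intro ij
  have h := QCImono_mul hyx 1 0 (ij.1 : ℕ) (ij.2 : ℕ)
  rw [show 1 + (ij.1 : ℕ) = (ij.1 : ℕ) + 1 by omega] at h
  simp only [QCImono, pow_zero, pow_one, one_mul, mul_one, zero_mul, Nat.zero_add,
    Nat.add_zero] at h ⊢
  rw [LinearMap.mulLeft_apply, hb, h, one_smul]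

include hyx hb in
lemma QCI_hop_mulx : ∀ ij : Fin p × Fin p,
    (LinearMap.mulRight k x) (b ij)
      = (fun _ j : ℕ => q ^ j) (ij.1 : ℕ) (ij.2 : ℕ)
          • QCImono x y ((ij.1 : ℕ) + 1) ((ij.2 : ℕ) + 0) := by
  intro ij
  have h := QCImono_mul hyx (ij.1 : ℕ) (ij.2 : ℕ) 1 0
  simp only [QCImono, pow_zero, pow_one, one_mul, mul_one, Nat.zero_add, Nat.add_zero] at h ⊢
  rw [LinearMap.mulRight_apply, hb, h]

include hyx hb in
lemma QCI_hop_muly : ∀ ij : Fin p × Fin p,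
    (LinearMap.mulRight k y) (b ij)
      = (fun _ _ : ℕ => (1 : k)) (ij.1 : ℕ) (ij.2 : ℕ)
          • QCImono x y ((ij.1 : ℕ) + 0) ((ij.2 : ℕ) + 1) := by
  intro ij
  have h := QCImono_mul hyx (ij.1 : ℕ) (ij.2 : ℕ) 0 1
  simp only [QCImono, pow_zero, pow_one, one_mul, mul_one, mul_zero, Nat.zero_add,
    Nat.add_zero] at h ⊢
  rw [LinearMap.mulRight_apply, hb, h, one_smul]

end QCIAux2

section QCIAux3

variable {k : Type*} [Field k] {A : Type*} [Ring A] [Algebra k A]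
variable {p : ℕ} {q : k} {x y : A} {b : Module.Basis (Fin p × Fin p) k A}

variable (hyx : y * x = q • (x * y)) (hx : x ^ p = 0) (hy : y ^ p = 0)
variable (hb : ∀ ij : Fin p × Fin p, b ij = x ^ (ij.1 : ℕ) * y ^ (ij.2 : ℕ))

-- specialized coordinate formulas
include hyx hx hy hb

lemma QCI_repr_y_mul (w : A) (s t t' : Fin p) (ht : (t' : ℕ) + 1 = (t : ℕ)) :
    b.repr (y * w) (s, t) = b.repr w (s, t') * q ^ (s : ℕ) := by
  have h := QCI_repr_op_single hb hx hy (LinearMap.mulLeft k y) 0 1 (fun i _ : ℕ => q ^ i)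
    (QCI_hop_ymul hyx hb) w s t s t' (Nat.add_zero _) ht
  simpa only [LinearMap.mulLeft_apply] using h

lemma QCI_repr_y_mul_zero (w : A) (s t : Fin p) (ht : (t : ℕ) = 0) :
    b.repr (y * w) (s, t) = 0 := by
  have h := QCI_repr_op_zero hb hx hy (LinearMap.mulLeft k y) 0 1 (fun i _ : ℕ => q ^ i)
    (QCI_hop_ymul hyx hb) w s t (by omega)
  simpa only [LinearMap.mulLeft_apply] using h

lemma QCI_repr_x_mul (w : A) (s t s' : Fin p) (hs : (s' : ℕ) + 1 = (s : ℕ)) :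
    b.repr (x * w) (s, t) = b.repr w (s', t) * 1 := by
  have h := QCI_repr_op_single hb hx hy (LinearMap.mulLeft k x) 1 0 (fun _ _ : ℕ => (1:k))
    (QCI_hop_xmul hyx hb) w s t s' t hs (Nat.add_zero _)
  simpa only [LinearMap.mulLeft_apply] using h

lemma QCI_repr_x_mul_zero (w : A) (s t : Fin p) (hs : (s : ℕ) = 0) :
    b.repr (x * w) (s, t) = 0 := by
  have h := QCI_repr_op_zero hb hx hy (LinearMap.mulLeft k x) 1 0 (fun _ _ : ℕ => (1:k))
    (QCI_hop_xmul hyx hb) w s t (by omega)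
  simpa only [LinearMap.mulLeft_apply] using h

lemma QCI_repr_mul_x (w : A) (s t s' : Fin p) (hs : (s' : ℕ) + 1 = (s : ℕ)) :
    b.repr (w * x) (s, t) = b.repr w (s', t) * q ^ (t : ℕ) := by
  have h := QCI_repr_op_single hb hx hy (LinearMap.mulRight k x) 1 0 (fun _ j : ℕ => q ^ j)
    (QCI_hop_mulx hyx hb) w s t s' t hs (Nat.add_zero _)
  simpa only [LinearMap.mulRight_apply] using h

lemma QCI_repr_mul_x_zero (w : A) (s t : Fin p) (hs : (s : ℕ) = 0) :
    b.repr (w * x) (s, t) = 0 := by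
  have h := QCI_repr_op_zero hb hx hy (LinearMap.mulRight k x) 1 0 (fun _ j : ℕ => q ^ j)
    (QCI_hop_mulx hyx hb) w s t (by omega)
  simpa only [LinearMap.mulRight_apply] using h

lemma QCI_repr_mul_y (w : A) (s t t' : Fin p) (ht : (t' : ℕ) + 1 = (t : ℕ)) :
    b.repr (w * y) (s, t) = b.repr w (s, t') * 1 := by
  have h := QCI_repr_op_single hb hx hy (LinearMap.mulRight k y) 0 1 (fun _ _ : ℕ => (1:k))
    (QCI_hop_muly hyx hb) w s t s t' (Nat.add_zero _) ht
  simpa only [LinearMap.mulRight_apply] using h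

lemma QCI_repr_mul_y_zero (w : A) (s t : Fin p) (ht : (t : ℕ) = 0) :
    b.repr (w * y) (s, t) = 0 := by
  have h := QCI_repr_op_zero hb hx hy (LinearMap.mulRight k y) 0 1 (fun _ _ : ℕ => (1:k))
    (QCI_hop_muly hyx hb) w s t (by omega)
  simpa only [LinearMap.mulRight_apply] using h

omit hx hy hb in
/-- The key coefficient identity coming from applying a derivation to the relation
`y x = q • (x y)`. -/
lemma QCI_deriv_eq (f : Module.End k A) (hf : IsDeriv k A f) :
    q • (x * f y) + q • (f x * y) = y * f x + f y * x := by
  have hf' := hf y x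
  rw [hyx, map_smul, hf x y, smul_add] at hf'
  exact hf'

omit hyx hx hy hb in
lemma QCI_cancel (hq1 : q ≠ 1) {α : k} (h : α = q * α) : α = 0 := by
  have h2 : (1 - q) * α = 0 := by ring_nf; linear_combination h
  rcases mul_eq_zero.mp h2 with h3 | h3
  · exact absurd (by linear_combination -h3) hq1
  · exact h3

/-- Vanishing of low coefficients of `f x` for any derivation `f`. -/
lemma QCI_deriv_fx_coeff (hq1 : q ≠ 1) (f : Module.End k A) (hf : IsDeriv k A f)
    (st : Fin p × Fin p) (hs : (st.1 : ℕ) = 0) (ht : (st.2 : ℕ) + 1 < p) :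
    b.repr (f x) st = 0 := by
  obtain ⟨s, t'⟩ := st
  simp only at hs ht ⊢
  set t : Fin p := ⟨(t' : ℕ) + 1, ht⟩ with htdef
  have hE := congrArg (fun w => b.repr w (s, t)) (QCI_deriv_eq hyx f hf)
  simp only [map_add, Finsupp.add_apply, map_smul, Finsupp.smul_apply, smul_eq_mul] at hE
  rw [QCI_repr_x_mul_zero hyx hx hy hb (f y) s t hs,
    QCI_repr_mul_y hyx hx hy hb (f x) s t t' rfl,
    QCI_repr_y_mul hyx hx hy hb (f x) s t t' rfl,
    QCI_repr_mul_x_zero hyx hx hy hb (f y) s t hs] at hE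
  rw [hs, pow_zero] at hE
  -- hE : q * 0 + q * (repr (f x) (s,t') * 1) = repr (f x) (s,t') * 1 + 0
  refine QCI_cancel hq1 ?_
  linear_combination -hE

/-- Vanishing of low coefficients of `f y` for any derivation `f`. -/
lemma QCI_deriv_fy_coeff (hq1 : q ≠ 1) (f : Module.End k A) (hf : IsDeriv k A f)
    (st : Fin p × Fin p) (hs : (st.1 : ℕ) + 1 < p) (ht : (st.2 : ℕ) = 0) :
    b.repr (f y) st = 0 := by
  obtain ⟨s', t⟩ := st
  simp only at hs ht ⊢
  set s : Fin p := ⟨(s' : ℕ) + 1, hs⟩ with hsdef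
  have hE := congrArg (fun w => b.repr w (s, t)) (QCI_deriv_eq hyx f hf)
  simp only [map_add, Finsupp.add_apply, map_smul, Finsupp.smul_apply, smul_eq_mul] at hE
  rw [QCI_repr_x_mul hyx hx hy hb (f y) s t s' rfl,
    QCI_repr_mul_y_zero hyx hx hy hb (f x) s t ht,
    QCI_repr_y_mul_zero hyx hx hy hb (f x) s t ht,
    QCI_repr_mul_x hyx hx hy hb (f y) s t s' rfl] at hE
  rw [ht, pow_zero] at hE
  refine QCI_cancel hq1 ?_
  linear_combination -hE

end QCIAux3

section QCIAux4

variable {k : Type*} [Field k] {A : Type*} [Ring A] [Algebra k A]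
variable {p : ℕ} {q : k} {x y : A} {b : Module.Basis (Fin p × Fin p) k A}

variable (hyx : y * x = q • (x * y)) (hx : x ^ p = 0) (hy : y ^ p = 0)
variable (hb : ∀ ij : Fin p × Fin p, b ij = x ^ (ij.1 : ℕ) * y ^ (ij.2 : ℕ))

lemma QCIV_antitone {m n : ℕ} (h : m ≤ n) : QCIV b n ≤ QCIV b m :=
  Submodule.span_mono (Set.image_mono (fun ij hij => le_trans h hij))

lemma QCIV_zero : QCIV b 0 = ⊤ := by
  have : {ij : Fin p × Fin p | 0 ≤ (ij.1 : ℕ) + (ij.2 : ℕ)} = Set.univ := by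
    ext ij; simp
  rw [QCIV, this, Set.image_univ, b.span_eq]

lemma QCIV_bot {m : ℕ} (hm : 2 * p - 1 ≤ m) : QCIV b m = ⊥ := by
  have : {ij : Fin p × Fin p | m ≤ (ij.1 : ℕ) + (ij.2 : ℕ)} = ∅ := by
    ext ij
    simp only [Set.mem_setOf_eq, Set.mem_empty_iff_false, iff_false, not_le]
    have h1 := ij.1.isLt
    have h2 := ij.2.isLt
    omega
  rw [QCIV, this, Set.image_empty, Submodule.span_empty]

lemma QCI_mem_V_iff {w : A} {m : ℕ} :
    w ∈ QCIV b m ↔ ∀ ij : Fin p × Fin p, b.repr w ij ≠ 0 → m ≤ (ij.1 : ℕ) + (ij.2 : ℕ) := by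
  rw [QCIV, Module.Basis.mem_span_image]
  constructor
  · intro h ij hij
    exact h (Finsupp.mem_support_iff.mpr hij)
  · intro h ij hij
    exact h ij (Finsupp.mem_support_iff.mp hij)

include hb hx hy in
lemma QCI_mono_mem_V (i j m : ℕ) (hm : m ≤ i + j) : QCImono x y i j ∈ QCIV b m := by
  by_cases hi : i < p
  · by_cases hj : j < p
    · rw [QCImono_eq_b hb i j hi hj]
      exact Submodule.subset_span ⟨(⟨i, hi⟩, ⟨j, hj⟩), hm, rfl⟩
    · rw [QCImono_eq_zero hx hy (Or.inr (le_of_not_gt hj))]; exact zero_mem _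
  · rw [QCImono_eq_zero hx hy (Or.inl (le_of_not_gt hi))]; exact zero_mem _

include hyx hx hy hb in
lemma QCI_mul_mem_V {u v : A} {m n : ℕ} (hu : u ∈ QCIV b m) (hv : v ∈ QCIV b n) :
    u * v ∈ QCIV b (m + n) := by
  have hle : QCIV b m * QCIV b n ≤ QCIV b (m + n) := by
    rw [QCIV, QCIV, Submodule.span_mul_span]
    rw [Submodule.span_le]
    rintro z ⟨u', ⟨ij, hij, rfl⟩, v', ⟨ij', hij', rfl⟩, rfl⟩
    have : b ij * b ij' = q ^ ((ij.2 : ℕ) * (ij'.1 : ℕ))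
        • QCImono x y ((ij.1 : ℕ) + (ij'.1 : ℕ)) ((ij.2 : ℕ) + (ij'.2 : ℕ)) := by
      rw [hb ij, hb ij',
        show x ^ (ij.1 : ℕ) * y ^ (ij.2 : ℕ) = QCImono x y (ij.1 : ℕ) (ij.2 : ℕ) from rfl,
        show x ^ (ij'.1 : ℕ) * y ^ (ij'.2 : ℕ) = QCImono x y (ij'.1 : ℕ) (ij'.2 : ℕ) from rfl,
        QCImono_mul hyx]
    rw [SetLike.mem_coe]
    show b ij * b ij' ∈ QCIV b (m + n)
    rw [this]
    refine Submodule.smul_mem _ _ (QCI_mono_mem_V hx hy hb _ _ _ ?_)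
    have h1 : m ≤ (ij.1 : ℕ) + (ij.2 : ℕ) := hij
    have h2 : n ≤ (ij'.1 : ℕ) + (ij'.2 : ℕ) := hij'
    omega
  exact hle (Submodule.mul_mem_mul hu hv)

include hb hx hy in
lemma QCI_x_mem_V : x ∈ QCIV b 1 := by
  have : x = QCImono x y 1 0 := by simp [QCImono]
  rw [this]; exact QCI_mono_mem_V hx hy hb 1 0 1 (by omega)

include hb hx hy in
lemma QCI_y_mem_V : y ∈ QCIV b 1 := by
  have : y = QCImono x y 0 1 := by simp [QCImono]
  rw [this]; exact QCI_mono_mem_V hx hy hb 0 1 1 (by omega)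

include hb hx hy in
lemma QCI_xpow_mem_V (i : ℕ) : x ^ i ∈ QCIV b i := by
  have : x ^ i = QCImono x y i 0 := by simp [QCImono]
  rw [this]; exact QCI_mono_mem_V hx hy hb i 0 i (by omega)

include hb hx hy in
lemma QCI_ypow_mem_V (j : ℕ) : y ^ j ∈ QCIV b j := by
  have : y ^ j = QCImono x y 0 j := by simp [QCImono]
  rw [this]; exact QCI_mono_mem_V hx hy hb 0 j j (by omega)

lemma QCI_deriv_one (f : Module.End k A) (hf : IsDeriv k A f) : f 1 = 0 := by
  have h := hf 1 1
  simp only [mul_one, one_mul] at h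
  exact left_eq_add.mp h

include hyx hx hy hb in
/-- A derivation whose values on `x` and `y` lie in `V (n+1)` raises filtration degree
by at least `n`. -/
lemma QCI_deriv_filtration (f : Module.End k A) (hf : IsDeriv k A f) (n : ℕ)
    (hfx : f x ∈ QCIV b (n + 1)) (hfy : f y ∈ QCIV b (n + 1)) :
    ∀ m w, w ∈ QCIV b m → f w ∈ QCIV b (m + n) := by
  have hxpow : ∀ i : ℕ, f (x ^ i) ∈ QCIV b (i + n) := by
    intro i
    induction i with
    | zero => rw [pow_zero, QCI_deriv_one f hf]; exact zero_mem _
    | succ i ih =>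
      rw [pow_succ, hf (x ^ i) x]
      refine add_mem ?_ ?_
      · have := QCI_mul_mem_V hyx hx hy hb (QCI_xpow_mem_V hx hy hb i) hfx
        exact QCIV_antitone (by omega) this
      · have := QCI_mul_mem_V hyx hx hy hb ih (QCI_x_mem_V hx hy hb)
        exact QCIV_antitone (by omega) this
  have hypow : ∀ j : ℕ, f (y ^ j) ∈ QCIV b (j + n) := by
    intro j
    induction j with
    | zero => rw [pow_zero, QCI_deriv_one f hf]; exact zero_mem _
    | succ j ih =>
      rw [pow_succ, hf (y ^ j) y]
      refine add_mem ?_ ?_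
      · have := QCI_mul_mem_V hyx hx hy hb (QCI_ypow_mem_V hx hy hb j) hfy
        exact QCIV_antitone (by omega) this
      · have := QCI_mul_mem_V hyx hx hy hb ih (QCI_y_mem_V hx hy hb)
        exact QCIV_antitone (by omega) this
  have hbasis : ∀ ij : Fin p × Fin p, f (b ij) ∈ QCIV b ((ij.1 : ℕ) + (ij.2 : ℕ) + n) := by
    intro ij
    rw [hb ij, hf (x ^ (ij.1 : ℕ)) (y ^ (ij.2 : ℕ))]
    refine add_mem ?_ ?_
    · have := QCI_mul_mem_V hyx hx hy hb (QCI_xpow_mem_V hx hy hb (ij.1 : ℕ))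
        (hypow (ij.2 : ℕ))
      exact QCIV_antitone (by omega) this
    · have := QCI_mul_mem_V hyx hx hy hb (hxpow (ij.1 : ℕ)) (QCI_ypow_mem_V hx hy hb (ij.2 : ℕ))
      exact QCIV_antitone (by omega) this
  intro m w hw
  induction hw using Submodule.span_induction with
  | mem z hz =>
    obtain ⟨ij, hij, rfl⟩ := hz
    have h1 : m ≤ (ij.1 : ℕ) + (ij.2 : ℕ) := hij
    exact QCIV_antitone (by omega) (hbasis ij)
  | zero => rw [map_zero]; exact zero_mem _
  | add u v _ _ hu hv => rw [map_add]; exact add_mem hu hv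
  | smul c u _ hu => rw [map_smul]; exact Submodule.smul_mem _ _ hu

end QCIAux4

section QCIAux5

variable {k : Type*} [Field k] {A : Type*} [Ring A] [Algebra k A]
variable {p : ℕ} {q : k} {x y : A} {b : Module.Basis (Fin p × Fin p) k A}

variable (hyx : y * x = q • (x * y)) (hx : x ^ p = 0) (hy : y ^ p = 0)
variable (hb : ∀ ij : Fin p × Fin p, b ij = x ^ (ij.1 : ℕ) * y ^ (ij.2 : ℕ))
variable (hp3 : 3 ≤ p) (hq1 : q ≠ 1)

attribute [local instance 100] LieRing.ofAssociativeRing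

include hyx hx hy hb hp3 hq1

lemma QCI_deriv_fx_V1 (f : Module.End k A) (hf : IsDeriv k A f) : f x ∈ QCIV b 1 := by
  rw [QCI_mem_V_iff]
  intro ij hne
  by_contra hlt
  push_neg at hlt
  have h1 : (ij.1 : ℕ) = 0 := by omega
  have h2 : (ij.2 : ℕ) = 0 := by omega
  exact hne (QCI_deriv_fx_coeff hyx hx hy hb hq1 f hf ij h1 (by omega))

lemma QCI_deriv_fy_V1 (f : Module.End k A) (hf : IsDeriv k A f) : f y ∈ QCIV b 1 := by
  rw [QCI_mem_V_iff]
  intro ij hne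
  by_contra hlt
  push_neg at hlt
  have h1 : (ij.1 : ℕ) = 0 := by omega
  have h2 : (ij.2 : ℕ) = 0 := by omega
  exact hne (QCI_deriv_fy_coeff hyx hx hy hb hq1 f hf ij (by omega) h2)

lemma QCI_deriv_fx_V2 (f : Module.End k A) (hf : IsDeriv k A f)
    (i1 i0 : Fin p) (h1 : (i1 : ℕ) = 1) (h0 : (i0 : ℕ) = 0) :
    f x - b.repr (f x) (i1, i0) • x ∈ QCIV b 2 := by
  have hxb : x = b (i1, i0) := by
    rw [hb]; simp [h1, h0]
  have hsingle : b.repr x = Finsupp.single (i1, i0) 1 := by rw [hxb, b.repr_self]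
  have hrepr : ∀ ij : Fin p × Fin p, b.repr (f x - b.repr (f x) (i1, i0) • x) ij
      = b.repr (f x) ij - b.repr (f x) (i1, i0) * (if (i1, i0) = ij then 1 else 0) := by
    intro ij
    rw [map_sub, map_smul, Finsupp.sub_apply, Finsupp.smul_apply, smul_eq_mul, hsingle,
      Finsupp.single_apply]
  rw [QCI_mem_V_iff]
  intro ij hne
  by_contra hlt
  push_neg at hlt
  apply hne
  rw [hrepr ij]
  have hcases : ((ij.1 : ℕ) = 0 ∧ (ij.2 : ℕ) = 0) ∨ ((ij.1 : ℕ) = 1 ∧ (ij.2 : ℕ) = 0)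
      ∨ ((ij.1 : ℕ) = 0 ∧ (ij.2 : ℕ) = 1) := by omega
  rcases hcases with ⟨ha, hc⟩ | ⟨ha, hc⟩ | ⟨ha, hc⟩
  · have hne' : (i1, i0) ≠ ij := by
      intro h
      have h' : (i1 : ℕ) = (ij.1 : ℕ) := congrArg (fun z : Fin p × Fin p => (z.1 : ℕ)) h
      omega
    rw [if_neg hne', QCI_deriv_fx_coeff hyx hx hy hb hq1 f hf ij ha (by omega)]
    ring
  · have heq : (i1, i0) = ij := Prod.ext (Fin.ext (show (i1:ℕ) = (ij.1:ℕ) by omega))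
      (Fin.ext (show (i0:ℕ) = (ij.2:ℕ) by omega))
    rw [if_pos heq, heq]
    ring
  · have hne' : (i1, i0) ≠ ij := by
      intro h
      have h' : (i1 : ℕ) = (ij.1 : ℕ) := congrArg (fun z : Fin p × Fin p => (z.1 : ℕ)) h
      omega
    rw [if_neg hne', QCI_deriv_fx_coeff hyx hx hy hb hq1 f hf ij ha (by omega)]
    ring

lemma QCI_deriv_fy_V2 (f : Module.End k A) (hf : IsDeriv k A f)
    (i1 i0 : Fin p) (h1 : (i1 : ℕ) = 1) (h0 : (i0 : ℕ) = 0) :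
    f y - b.repr (f y) (i0, i1) • y ∈ QCIV b 2 := by
  have hyb : y = b (i0, i1) := by
    rw [hb]; simp [h1, h0]
  have hsingle : b.repr y = Finsupp.single (i0, i1) 1 := by rw [hyb, b.repr_self]
  have hrepr : ∀ ij : Fin p × Fin p, b.repr (f y - b.repr (f y) (i0, i1) • y) ij
      = b.repr (f y) ij - b.repr (f y) (i0, i1) * (if (i0, i1) = ij then 1 else 0) := by
    intro ij
    rw [map_sub, map_smul, Finsupp.sub_apply, Finsupp.smul_apply, smul_eq_mul, hsingle,
      Finsupp.single_apply]
  rw [QCI_mem_V_iff]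
  intro ij hne
  by_contra hlt
  push_neg at hlt
  apply hne
  rw [hrepr ij]
  have hcases : ((ij.1 : ℕ) = 0 ∧ (ij.2 : ℕ) = 0) ∨ ((ij.1 : ℕ) = 1 ∧ (ij.2 : ℕ) = 0)
      ∨ ((ij.1 : ℕ) = 0 ∧ (ij.2 : ℕ) = 1) := by omega
  rcases hcases with ⟨ha, hc⟩ | ⟨ha, hc⟩ | ⟨ha, hc⟩
  · have hne' : (i0, i1) ≠ ij := by
      intro h
      have h' : (i1 : ℕ) = (ij.2 : ℕ) := congrArg (fun z : Fin p × Fin p => (z.2 : ℕ)) h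
      omega
    rw [if_neg hne', QCI_deriv_fy_coeff hyx hx hy hb hq1 f hf ij (by omega) hc]
    ring
  · have hne' : (i0, i1) ≠ ij := by
      intro h
      have h' : (i1 : ℕ) = (ij.2 : ℕ) := congrArg (fun z : Fin p × Fin p => (z.2 : ℕ)) h
      omega
    rw [if_neg hne', QCI_deriv_fy_coeff hyx hx hy hb hq1 f hf ij (by omega) hc]
    ring
  · have heq : (i0, i1) = ij := Prod.ext (Fin.ext (show (i0:ℕ) = (ij.1:ℕ) by omega))
      (Fin.ext (show (i1:ℕ) = (ij.2:ℕ) by omega))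
    rw [if_pos heq, heq]
    ring

/-- The commutator of two derivations sends `x` into `V 2`. -/
lemma QCI_bracket_x_V2 (f g : Module.End k A) (hf : IsDeriv k A f) (hg : IsDeriv k A g) :
    f (g x) - g (f x) ∈ QCIV b 2 := by
  set i1 : Fin p := ⟨1, by omega⟩ with hi1
  set i0 : Fin p := ⟨0, by omega⟩ with hi0
  set α := b.repr (f x) (i1, i0) with hα
  set β := b.repr (g x) (i1, i0) with hβ
  set u := f x - α • x with hu
  set v := g x - β • x with hv
  have hu2 : u ∈ QCIV b 2 := QCI_deriv_fx_V2 hyx hx hy hb hp3 hq1 f hf i1 i0 rfl rfl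
  have hv2 : v ∈ QCIV b 2 := QCI_deriv_fx_V2 hyx hx hy hb hp3 hq1 g hg i1 i0 rfl rfl
  have hfx' : f x = α • x + u := by rw [hu]; abel
  have hgx' : g x = β • x + v := by rw [hv]; abel
  have hfW : ∀ m w, w ∈ QCIV b m → f w ∈ QCIV b m := fun m w hw =>
    QCI_deriv_filtration hyx hx hy hb f hf 0
      (QCI_deriv_fx_V1 hyx hx hy hb hp3 hq1 f hf) (QCI_deriv_fy_V1 hyx hx hy hb hp3 hq1 f hf)
      m w hw
  have hgW : ∀ m w, w ∈ QCIV b m → g w ∈ QCIV b m := fun m w hw =>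
    QCI_deriv_filtration hyx hx hy hb g hg 0
      (QCI_deriv_fx_V1 hyx hx hy hb hp3 hq1 g hg) (QCI_deriv_fy_V1 hyx hx hy hb hp3 hq1 g hg)
      m w hw
  have e1 : f (g x) = β • (α • x) + (β • u + f v) := by
    rw [hgx', map_add, map_smul, hfx', smul_add]
    abel
  have e2 : g (f x) = α • (β • x) + (α • v + g u) := by
    rw [hfx', map_add, map_smul, hgx', smul_add]
    abel
  have e3 : β • (α • x) = α • (β • x) := by
    rw [smul_smul, smul_smul, mul_comm]
  have e4 : f (g x) - g (f x) = (β • u + f v) - (α • v + g u) := by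
    rw [e1, e2, e3]
    abel
  rw [e4]
  exact sub_mem (add_mem (Submodule.smul_mem _ _ hu2) (hfW 2 v hv2))
    (add_mem (Submodule.smul_mem _ _ hv2) (hgW 2 u hu2))

/-- The commutator of two derivations sends `y` into `V 2`. -/
lemma QCI_bracket_y_V2 (f g : Module.End k A) (hf : IsDeriv k A f) (hg : IsDeriv k A g) :
    f (g y) - g (f y) ∈ QCIV b 2 := by
  set i1 : Fin p := ⟨1, by omega⟩ with hi1
  set i0 : Fin p := ⟨0, by omega⟩ with hi0
  set α := b.repr (f y) (i0, i1) with hα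
  set β := b.repr (g y) (i0, i1) with hβ
  set u := f y - α • y with hu
  set v := g y - β • y with hv
  have hu2 : u ∈ QCIV b 2 := QCI_deriv_fy_V2 hyx hx hy hb hp3 hq1 f hf i1 i0 rfl rfl
  have hv2 : v ∈ QCIV b 2 := QCI_deriv_fy_V2 hyx hx hy hb hp3 hq1 g hg i1 i0 rfl rfl
  have hfy' : f y = α • y + u := by rw [hu]; abel
  have hgy' : g y = β • y + v := by rw [hv]; abel
  have hfW : ∀ m w, w ∈ QCIV b m → f w ∈ QCIV b m := fun m w hw =>
    QCI_deriv_filtration hyx hx hy hb f hf 0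
      (QCI_deriv_fx_V1 hyx hx hy hb hp3 hq1 f hf) (QCI_deriv_fy_V1 hyx hx hy hb hp3 hq1 f hf)
      m w hw
  have hgW : ∀ m w, w ∈ QCIV b m → g w ∈ QCIV b m := fun m w hw =>
    QCI_deriv_filtration hyx hx hy hb g hg 0
      (QCI_deriv_fx_V1 hyx hx hy hb hp3 hq1 g hg) (QCI_deriv_fy_V1 hyx hx hy hb hp3 hq1 g hg)
      m w hw
  have e1 : f (g y) = β • (α • y) + (β • u + f v) := by
    rw [hgy', map_add, map_smul, hfy', smul_add]
    abel
  have e2 : g (f y) = α • (β • y) + (α • v + g u) := by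
    rw [hfy', map_add, map_smul, hgy', smul_add]
    abel
  have e3 : β • (α • y) = α • (β • y) := by
    rw [smul_smul, smul_smul, mul_comm]
  have e4 : f (g y) - g (f y) = (β • u + f v) - (α • v + g u) := by
    rw [e1, e2, e3]
    abel
  rw [e4]
  exact sub_mem (add_mem (Submodule.smul_mem _ _ hu2) (hfW 2 v hv2))
    (add_mem (Submodule.smul_mem _ _ hv2) (hgW 2 u hu2))

/-- Commutators of derivations raise the filtration degree by at least 1. -/
lemma QCI_bracket_W1 (f g : Module.End k A) (hf : IsDeriv k A f) (hg : IsDeriv k A g) :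
    ∀ m w, w ∈ QCIV b m → (⁅f, g⁆ : Module.End k A) w ∈ QCIV b (m + 1) := by
  have hder : (⁅f, g⁆ : Module.End k A) ∈ Der k A :=
    (Der k A).lie_mem (show f ∈ Der k A from hf) (show g ∈ Der k A from hg)
  have happ : ∀ w : A, (⁅f, g⁆ : Module.End k A) w = f (g w) - g (f w) := by
    intro w
    rw [Ring.lie_def, LinearMap.sub_apply, Module.End.mul_apply, Module.End.mul_apply]
  have hbx : (⁅f, g⁆ : Module.End k A) x ∈ QCIV b 2 := by
    rw [happ]; exact QCI_bracket_x_V2 hyx hx hy hb hp3 hq1 f g hf hg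
  have hby : (⁅f, g⁆ : Module.End k A) y ∈ QCIV b 2 := by
    rw [happ]; exact QCI_bracket_y_V2 hyx hx hy hb hp3 hq1 f g hf hg
  exact QCI_deriv_filtration hyx hx hy hb _ hder 1 hbx hby

end QCIAux5


set_option maxHeartbeats 1000000 in
set_option synthInstance.maxHeartbeats 400000 in
/-- Theorem 1.1(iv): the derived subalgebra `L' = [L,L]` of `L = HH¹(A)` is nilpotent;
in particular `L` is solvable. -/
theorem derived_HH1_nilpotent_quantum_complete_intersection
    (k : Type*) [Field k] (p e : ℕ) (q : k)
    (hp : p.Prime) (hodd : Odd p) (hchar : CharP k p)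
    (hq : orderOf q = e) (he : 2 ≤ e) (hediv : e ∣ p - 1)
    (A : Type*) [Ring A] [Algebra k A] (x y : A)
    (hx : x ^ p = 0) (hy : y ^ p = 0) (hyx : y * x = q • (x * y))
    (b : Module.Basis (Fin p × Fin p) k A)
    (hb : ∀ ij : Fin p × Fin p, b ij = x ^ (ij.1 : ℕ) * y ^ (ij.2 : ℕ)) :
    LieRing.IsNilpotent ↥(LieAlgebra.derivedSeries k (HH1 k A) 1) ∧
    LieAlgebra.IsSolvable (HH1 k A) := by
  classical
  letI : LieRing (Module.End k A) := LieRing.ofAssociativeRing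
  have hp3 : 3 ≤ p := by
    rcases hodd with ⟨m, hm⟩
    have := hp.two_le
    omega
  have hq1 : q ≠ 1 := by
    intro h
    rw [h, orderOf_one] at hq
    omega
  -- every derivation preserves the filtration
  have hW0 : ∀ f : ↥(Der k A), ∀ m w, w ∈ QCIV b m →
      (f : Module.End k A) w ∈ QCIV b m := by
    intro f m w hw
    exact QCI_deriv_filtration hyx hx hy hb _ f.2 0
      (QCI_deriv_fx_V1 hyx hx hy hb hp3 hq1 _ f.2)
      (QCI_deriv_fy_V1 hyx hx hy hb hp3 hq1 _ f.2) m w hw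
  -- the ideal of W1 elements of Der
  let J1 : LieIdeal k ↥(Der k A) :=
    { carrier := {h : ↥(Der k A) |
        ∀ m w, w ∈ QCIV b m → (h : Module.End k A) w ∈ QCIV b (m + 1)}
      add_mem' := by
        intro f g hf hg m w hw
        have : ((f + g : ↥(Der k A)) : Module.End k A) w
            = (f : Module.End k A) w + (g : Module.End k A) w := rfl
        rw [this]
        exact add_mem (hf m w hw) (hg m w hw)
      zero_mem' := by
        intro m w hw
        have : ((0 : ↥(Der k A)) : Module.End k A) w = 0 := rfl
        rw [this]
        exact zero_mem _
      smul_mem' := by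
        intro c f hf m w hw
        have : ((c • f : ↥(Der k A)) : Module.End k A) w = c • ((f : Module.End k A) w) := rfl
        rw [this]
        exact Submodule.smul_mem _ _ (hf m w hw)
      lie_mem := by
        intro g f hf m w hw
        have hco : ((⁅g, f⁆ : ↥(Der k A)) : Module.End k A)
            = ⁅(g : Module.End k A), (f : Module.End k A)⁆ := rfl
        rw [hco, Ring.lie_def, LinearMap.sub_apply, Module.End.mul_apply, Module.End.mul_apply]
        refine sub_mem ?_ ?_
        · exact hW0 g (m + 1) ((f : Module.End k A) w) (hf m w hw)
        · exact hf m ((g : Module.End k A) w) (hW0 g m w hw) }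
  have hJ1mem : ∀ h : ↥(Der k A), h ∈ J1 ↔
      ∀ m w, w ∈ QCIV b m → (h : Module.End k A) w ∈ QCIV b (m + 1) := fun h => Iff.rfl
  -- D1 = derived ideal of Der
  have hD1le : LieAlgebra.derivedSeries k ↥(Der k A) 1 ≤ J1 := by
    have hspan : LieAlgebra.derivedSeries k ↥(Der k A) 1
        = ⁅(⊤ : LieIdeal k ↥(Der k A)), (⊤ : LieIdeal k ↥(Der k A))⁆ := by
      rw [LieAlgebra.derivedSeries_def, LieAlgebra.derivedSeriesOfIdeal_succ,
        LieAlgebra.derivedSeriesOfIdeal_zero]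
    rw [hspan, LieSubmodule.lieIdeal_oper_eq_span]
    rw [LieSubmodule.lieSpan_le]
    rintro z ⟨f, g, rfl⟩
    rw [SetLike.mem_coe, hJ1mem]
    intro m w hw
    have hco : ((⁅(f : ↥(Der k A)), (g : ↥(Der k A))⁆ : ↥(Der k A)) : Module.End k A)
        = ⁅((f : ↥(Der k A)) : Module.End k A), ((g : ↥(Der k A)) : Module.End k A)⁆ := rfl
    rw [hco]
    exact QCI_bracket_W1 hyx hx hy hb hp3 hq1 _ _ (f : ↥(Der k A)).2 (g : ↥(Der k A)).2 m w hw
  set D1 : LieIdeal k ↥(Der k A) := LieAlgebra.derivedSeries k ↥(Der k A) 1 with hD1def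
  have hD1W : ∀ h : ↥(Der k A), h ∈ D1 → ∀ m w, w ∈ QCIV b m →
      (h : Module.End k A) w ∈ QCIV b (m + 1) := fun h hh => (hJ1mem h).mp (hD1le hh)
  -- nilpotency of D1 via the filtration submodules K n
  let K : ℕ → LieSubmodule k ↥D1 ↥D1 := fun n =>
    { carrier := {g : ↥D1 | ∀ m w, w ∈ QCIV b m →
        (((g : ↥(Der k A))) : Module.End k A) w ∈ QCIV b (m + n + 1)}
      add_mem' := by
        intro f g hf hg m w hw
        have : (((f + g : ↥D1) : ↥(Der k A)) : Module.End k A) w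
            = ((f : ↥(Der k A)) : Module.End k A) w + ((g : ↥(Der k A)) : Module.End k A) w := rfl
        rw [this]
        exact add_mem (hf m w hw) (hg m w hw)
      zero_mem' := by
        intro m w hw
        have : (((0 : ↥D1) : ↥(Der k A)) : Module.End k A) w = 0 := rfl
        rw [this]
        exact zero_mem _
      smul_mem' := by
        intro c f hf m w hw
        have : (((c • f : ↥D1) : ↥(Der k A)) : Module.End k A) w
            = c • (((f : ↥(Der k A)) : Module.End k A) w) := rfl
        rw [this]
        exact Submodule.smul_mem _ _ (hf m w hw)
      lie_mem := by
        intro a g hg m w hw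
        have hco : (((⁅a, g⁆ : ↥D1) : ↥(Der k A)) : Module.End k A)
            = ⁅((a : ↥(Der k A)) : Module.End k A), ((g : ↥(Der k A)) : Module.End k A)⁆ := rfl
        rw [hco, Ring.lie_def, LinearMap.sub_apply, Module.End.mul_apply, Module.End.mul_apply]
        refine sub_mem ?_ ?_
        · exact QCIV_antitone (by omega)
            (hD1W _ a.2 (m + n + 1) _ (hg m w hw))
        · exact QCIV_antitone (by omega)
            (hg (m + 1) _ (hD1W _ a.2 m w hw)) }
  have hKmem : ∀ n (g : ↥D1), g ∈ K n ↔ ∀ m w, w ∈ QCIV b m →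
      (((g : ↥(Der k A))) : Module.End k A) w ∈ QCIV b (m + n + 1) := fun n g => Iff.rfl
  have hlcs : ∀ n, LieModule.lowerCentralSeries k ↥D1 ↥D1 n ≤ K n := by
    intro n
    induction n with
    | zero =>
      intro g _
      exact fun m w hw => hD1W _ g.2 m w hw
    | succ n ih =>
      rw [LieModule.lowerCentralSeries_succ, LieSubmodule.lieIdeal_oper_eq_span,
        LieSubmodule.lieSpan_le]
      rintro z ⟨a, g, rfl⟩
      rw [SetLike.mem_coe]
      show ∀ m w, w ∈ QCIV b m →
        (((⁅(a : ↥D1), (g : ↥D1)⁆ : ↥D1) : ↥(Der k A)) : Module.End k A) w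
          ∈ QCIV b (m + (n + 1) + 1)
      intro m w hw
      have hgK : ∀ m w, w ∈ QCIV b m →
          (((g : ↥D1) : ↥(Der k A)) : Module.End k A) w ∈ QCIV b (m + n + 1) := ih g.2
      have hco : (((⁅(a : ↥D1), (g : ↥D1)⁆ : ↥D1) : ↥(Der k A)) : Module.End k A)
          = ⁅(((a : ↥D1) : ↥(Der k A)) : Module.End k A),
             (((g : ↥D1) : ↥(Der k A)) : Module.End k A)⁆ := rfl
      rw [hco, Ring.lie_def, LinearMap.sub_apply, Module.End.mul_apply, Module.End.mul_apply]
      refine sub_mem ?_ ?_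
      · exact QCIV_antitone (by omega)
          (hD1W _ (a : ↥D1).2 (m + n + 1) _ (hgK m w hw))
      · exact QCIV_antitone (by omega)
          (hgK (m + 1) _ (hD1W _ (a : ↥D1).2 m w hw))
  have hnil : LieRing.IsNilpotent ↥D1 := by
    rw [LieRing.IsNilpotent, LieModule.isNilpotent_iff k]
    refine ⟨2 * p, ?_⟩
    rw [eq_bot_iff]
    refine le_trans (hlcs (2 * p)) ?_
    intro g hg'
    have hg : ∀ m w, w ∈ QCIV b m →
        ((g : ↥(Der k A)) : Module.End k A) w ∈ QCIV b (m + 2 * p + 1) := hg'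
    have hzero : ((g : ↥(Der k A)) : Module.End k A) = 0 := by
      apply LinearMap.ext
      intro w
      have hw : w ∈ QCIV b 0 := by rw [QCIV_zero]; trivial
      have hmem := hg 0 w hw
      rw [QCIV_bot (b := b) (by omega)] at hmem
      simpa using hmem
    have : (g : ↥(Der k A)) = 0 := Subtype.ext hzero
    rw [LieSubmodule.mem_bot]
    exact Subtype.ext this
  -- push to the quotient HH1
  let π : ↥(Der k A) →ₗ⁅k⁆ HH1 k A :=
    { toLinearMap := (LieSubmodule.Quotient.mk' (IDer k A)).toLinearMap
      map_lie' := by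
        intro a b'
        rfl }
  have hπ : Function.Surjective π := LieSubmodule.Quotient.surjective_mk' (IDer k A)
  have hmap : LieIdeal.map π D1 = LieAlgebra.derivedSeries k (HH1 k A) 1 :=
    LieIdeal.derivedSeries_map_eq 1 hπ
  let E := ↥(LieAlgebra.derivedSeries k (HH1 k A) 1)
  let ψ : ↥D1 →ₗ⁅k⁆ E :=
    { toFun := fun g => ⟨π (g : ↥(Der k A)), by rw [← hmap]; exact LieIdeal.mem_map g.2⟩
      map_add' := by
        intro a b'
        apply Subtype.ext
        show π ((a + b' : ↥D1) : ↥(Der k A)) = π (a : ↥(Der k A)) + π (b' : ↥(Der k A))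
        rw [show ((a + b' : ↥D1) : ↥(Der k A)) = (a : ↥(Der k A)) + (b' : ↥(Der k A)) from rfl,
          map_add]
      map_smul' := by
        intro c a
        apply Subtype.ext
        show π ((c • a : ↥D1) : ↥(Der k A)) = c • π (a : ↥(Der k A))
        rw [show ((c • a : ↥D1) : ↥(Der k A)) = c • (a : ↥(Der k A)) from rfl, map_smul]
      map_lie' := by
        intro a b'
        apply Subtype.ext
        show π ((⁅a, b'⁆ : ↥D1) : ↥(Der k A)) = ⁅π (a : ↥(Der k A)), π (b' : ↥(Der k A))⁆
        rw [show ((⁅a, b'⁆ : ↥D1) : ↥(Der k A)) = ⁅(a : ↥(Der k A)), (b' : ↥(Der k A))⁆ from rfl,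
          LieHom.map_lie] }
  have hψ : Function.Surjective ψ := by
    rintro ⟨z, hz⟩
    have hz' : z ∈ LieIdeal.map π D1 := by rw [hmap]; exact hz
    obtain ⟨g, hg⟩ := LieIdeal.mem_map_of_surjective hπ hz'
    exact ⟨g, Subtype.ext hg⟩
  haveI := hnil
  have hnilE : LieRing.IsNilpotent E := hψ.lieAlgebra_isNilpotent
  refine ⟨hnilE, ?_⟩
  haveI := hnilE
  haveI hsE : LieAlgebra.IsSolvable E := inferInstance
  obtain ⟨n, hn⟩ := (LieAlgebra.isSolvable_iff k E).mp hsE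
  refine (LieAlgebra.isSolvable_iff k _).mpr ⟨n + 1, ?_⟩
  have h1 : LieAlgebra.derivedSeriesOfIdeal k (HH1 k A) n
      (LieAlgebra.derivedSeries k (HH1 k A) 1) = ⊥ :=
    (LieIdeal.derivedSeries_eq_bot_iff (LieAlgebra.derivedSeries k (HH1 k A) 1) n).mp hn
  rw [LieAlgebra.derivedSeries_def,
    LieAlgebra.derivedSeriesOfIdeal_add ⊤ n 1, ← LieAlgebra.derivedSeries_def]
  exact h1
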